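/- arXiv:1106.1191 — 2 statements merged into one kernel-verified Lean document; each statement's English description precedes it below -/
import Mathlib

section
/- Let k be a field of characteristic zero, let f ∈ k[z_0,...,z_n] be a polynomial of order m with homogeneous decomposition f = Σ_{k≥m} f_k, and set F(z,t) = Σ_{k≥m} t^{k-m} f_k(z). Then for any t_0 ∈ k, the polynomial F(z, t + t_0) ∈ k[z_0,...,z_n,t] (obtained by substituting t ↦ t + t_0) has order m (as a polynomial in the n+2 variables z_0,...,z_n,t), and its initial form (lowest-degree homogeneous component in all variables z, t) equals f_m(z). -/
open MvPolynomial

/-- If `f` has order `m` and `F(z,t) = ∑_{d ≥ m} t^(d-m) f_d(z)` (with `t`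
indexed by `none : Option (Fin (n+1))`), then for any `t_0 ∈ k` the polynomial
`F(z, t + t_0)` has order `m` as a polynomial in all the variables `z, t`, and
its initial form equals `f_m(z)`. -/
theorem order_and_initial_form_of_shifted_specialization
    {k : Type*} [Field k] [CharZero k] {n : ℕ}
    (f : MvPolynomial (Fin (n + 1)) k) (m : ℕ)
    (hlow : ∀ d < m, homogeneousComponent d f = 0)
    (hm : homogeneousComponent m f ≠ 0)
    (F : MvPolynomial (Option (Fin (n + 1))) k)
    (hF : F = ∑ d ∈ Finset.Icc m f.totalDegree,
      X (none : Option (Fin (n + 1))) ^ (d - m) *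
        rename some (homogeneousComponent d f))
    (t₀ : k)
    (G : MvPolynomial (Option (Fin (n + 1))) k)
    (hG : G = aeval (fun v : Option (Fin (n + 1)) =>
      v.elim (X (none : Option (Fin (n + 1))) + C t₀) (fun i => X (some i))) F) :
    (∀ e < m, homogeneousComponent e G = 0) ∧
      homogeneousComponent m G ≠ 0 ∧
      homogeneousComponent m G = rename some (homogeneousComponent m f) := by
  have hmle : m ≤ f.totalDegree := by
    by_contra h
    push_neg at h
    exact hm (homogeneousComponent_eq_zero m f h)
  subst hF hG
  rw [map_sum]
  -- compute the substituted terms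
  have hterm : ∀ d : ℕ, (aeval (fun v : Option (Fin (n + 1)) =>
      v.elim (X (none : Option (Fin (n + 1))) + C t₀) (fun i => X (some i)))
      (X (none : Option (Fin (n + 1))) ^ (d - m) * rename some (homogeneousComponent d f)))
      = (X (none : Option (Fin (n + 1))) + C t₀) ^ (d - m) *
        rename some (homogeneousComponent d f) := by
    intro d
    rw [map_mul, map_pow, aeval_X]
    congr 1
    rw [aeval_rename]
    rw [rename_eq_aeval]; rfl
  -- homogeneous component of each term
  have hcomp : ∀ e ≤ m, ∀ d ∈ Finset.Icc m f.totalDegree,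
      homogeneousComponent e ((X (none : Option (Fin (n + 1))) + C t₀) ^ (d - m) *
        rename some (homogeneousComponent d f))
      = if e = m ∧ d = m then rename some (homogeneousComponent m f) else 0 := by
    intro e he d hd
    rw [Finset.mem_Icc] at hd
    rw [add_pow, Finset.sum_mul, map_sum]
    have hS : ∀ i : ℕ,
        (X (none : Option (Fin (n + 1))) ^ i * C t₀ ^ (d - m - i) * ((d - m).choose i : MvPolynomial (Option (Fin (n + 1))) k)
          * rename some (homogeneousComponent d f)).IsHomogeneous (i + d) := by
      intro i
      have h1 : (X (none : Option (Fin (n + 1))) ^ i * C t₀ ^ (d - m - i) *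
          ((d - m).choose i : MvPolynomial (Option (Fin (n + 1))) k)).IsHomogeneous i := by
        have hx : (X (none : Option (Fin (n + 1))) ^ i : MvPolynomial (Option (Fin (n + 1))) k).IsHomogeneous i := by
          simpa using (isHomogeneous_X k (none : Option (Fin (n + 1)))).pow i
        have hc : (C t₀ ^ (d - m - i) : MvPolynomial (Option (Fin (n + 1))) k).IsHomogeneous 0 := by
          simpa using (isHomogeneous_C (Option (Fin (n + 1))) t₀).pow (d - m - i)
        have hn : (((d - m).choose i : MvPolynomial (Option (Fin (n + 1))) k)).IsHomogeneous 0 := by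
          rw [← map_natCast (C : k →+* MvPolynomial (Option (Fin (n + 1))) k)]
          exact isHomogeneous_C _ _
        simpa using (hx.mul hc).mul hn
      have h2 := (homogeneousComponent_isHomogeneous d f).rename_isHomogeneous (f := some)
      exact h1.mul h2
    rw [Finset.sum_congr rfl (fun i _ => homogeneousComponent_of_mem
      ((mem_homogeneousSubmodule _ _).mpr (hS i)))]
    by_cases hem : e = m ∧ d = m
    · obtain ⟨rfl, rfl⟩ := hem
      simp
    · rw [if_neg hem]
      apply Finset.sum_eq_zero
      intro i _
      rw [if_neg]
      intro hei
      exact hem ⟨by omega, by omega⟩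
  have key : homogeneousComponent m (∑ d ∈ Finset.Icc m f.totalDegree,
        (aeval (fun v : Option (Fin (n + 1)) =>
          v.elim (X (none : Option (Fin (n + 1))) + C t₀) (fun i => X (some i))))
        (X (none : Option (Fin (n + 1))) ^ (d - m) * rename some (homogeneousComponent d f)))
        = rename some (homogeneousComponent m f) := by
    rw [Finset.sum_congr rfl (fun d _ => hterm d), map_sum,
      Finset.sum_congr rfl (fun d hd => hcomp m le_rfl d hd)]
    rw [Finset.sum_eq_single m]
    · simp
    · intro d _ hdm; simp [hdm]
    · intro h; exact absurd (Finset.mem_Icc.mpr ⟨le_rfl, hmle⟩) h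
  refine ⟨?_, ?_, key⟩
  · intro e he
    rw [Finset.sum_congr rfl (fun d _ => hterm d), map_sum,
      Finset.sum_congr rfl (fun d hd => hcomp e he.le d hd)]
    apply Finset.sum_eq_zero
    intro d _
    rw [if_neg]
    rintro ⟨rfl, -⟩
    omega
  · rw [key]
    intro h
    exact hm ((map_eq_zero_iff _ (rename_injective some (Option.some_injective _))).mp h)
end

section
/- Let k be a field, let f_1, ..., f_p ∈ k[z_0,...,z_n] with f_i of order m_i, and let F_i(z,t) ∈ k[z_0,...,z_n,t] be defined by F_i(z,t) = Σ_{k≥m_i} t^{k-m_i} (f_i)_k(z). Fix c row indices α_1 < ... < α_c ≤ p and c column indices β_1 < ... < β_c ≤ n+1, and let μ be the c × c minor of the Jacobian matrix [∂f_i/∂z_j] with rows α and columns β, and let M be the corresponding c × c minor of the relative Jacobian matrix [∂F_i/∂z_j] (partial derivatives only with respect to the z-variables). Then substituting z_i ↦ t·z_i in μ yields μ(t·z) = t^{(Σ_{l=1}^{c} m_{α_l}) − c} · M(z,t) in k[z_0,...,z_n,t]. -/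
open MvPolynomial

private lemma aux_hom_pderiv {k : Type*} [CommSemiring k] {σ : Type*} [DecidableEq σ]
    {q : MvPolynomial σ k} {d : ℕ} (hq : q.IsHomogeneous d) (j : σ) :
    (pderiv j q).IsHomogeneous (d - 1) := by
  rw [q.as_sum, map_sum]
  apply IsHomogeneous.sum
  intro u hu
  rw [pderiv_monomial]
  rcases eq_or_ne (u j) 0 with h | h
  · simp [h, isHomogeneous_zero]
  · apply isHomogeneous_monomial
    have hd : (Finsupp.weight 1) u = d := hq (mem_support_iff.mp hu)
    have h1 : u = (u - Finsupp.single j 1) + Finsupp.single j 1 := by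
      ext i
      simp only [Finsupp.coe_add, Finsupp.coe_tsub, Pi.add_apply, Pi.sub_apply,
        Finsupp.single_apply]
      rcases eq_or_ne j i with rfl | hij
      · rw [if_pos rfl]; omega
      · rw [if_neg hij]; omega
    have h2 : (Finsupp.weight (1 : σ → ℕ)) (Finsupp.single j 1) = 1 := by
      simp [Finsupp.weight_apply, Finsupp.sum_single_index]
    have h3 : (Finsupp.weight (1 : σ → ℕ)) u
        = (Finsupp.weight 1) (u - Finsupp.single j 1) + 1 := by
      conv_lhs => rw [h1]
      rw [map_add, h2]
    rw [Finsupp.degree_eq_weight_one]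
    simp only [Pi.one_def] at hd h3 ⊢
    omega

private lemma aux_subst {k : Type*} [CommSemiring k] {n : ℕ}
    {q : MvPolynomial (Fin (n + 1)) k} {e : ℕ} (hq : q.IsHomogeneous e) :
    aeval (fun i : Fin (n + 1) => X (none : Option (Fin (n + 1))) * X (some i)) q
      = X (none : Option (Fin (n + 1))) ^ e * rename some q := by
  conv_lhs => rw [q.as_sum]
  conv_rhs => rw [q.as_sum]
  rw [map_sum, map_sum, Finset.mul_sum]
  apply Finset.sum_congr rfl
  intro u hu
  have hd : (Finsupp.weight 1) u = e := hq (mem_support_iff.mp hu)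
  rw [aeval_monomial, rename_monomial, monomial_eq,
    Finsupp.prod_mapDomain_index_inj (Option.some_injective _)]
  simp only [mul_pow]
  rw [Finsupp.prod, Finset.prod_mul_distrib, Finset.prod_pow_eq_pow_sum]
  have hdeg : ∑ i ∈ u.support, u i = e := by
    rw [← hd, Finsupp.weight_apply, Finsupp.sum]
    simp
  rw [hdeg, algebraMap_eq, Finsupp.prod]
  ring

/-- Let `f_1, ..., f_p ∈ k[z_0, ..., z_n]` with `f_i` of order `m_i ≥ 1`, and
let `F_i(z,t) = ∑_{d ≥ m_i} t^(d-m_i) (f_i)_d(z)` (with `t` indexed by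
`none : Option (Fin (n+1))`).  For strictly increasing choices of `c` rows `α`
and `c` columns `β`, let `μ` be the corresponding `c × c` minor of the Jacobian
matrix `[∂f_i/∂z_j]` and `M` the corresponding minor of the relative Jacobian
matrix `[∂F_i/∂z_j]`.  Then `μ(t·z) = t^((∑_l m_(α l)) - c) * M(z,t)`. -/
theorem jacobian_minor_subst {k : Type*} [Field k] [CharZero k] {n p c : ℕ}
    (f : Fin p → MvPolynomial (Fin (n + 1)) k) (m : Fin p → ℕ)
    (hm0 : ∀ i, 0 < m i)
    (hlow : ∀ i, ∀ d < m i, homogeneousComponent d (f i) = 0)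
    (hord : ∀ i, homogeneousComponent (m i) (f i) ≠ 0)
    (F : Fin p → MvPolynomial (Option (Fin (n + 1))) k)
    (hF : ∀ i, F i = ∑ d ∈ Finset.Icc (m i) (f i).totalDegree,
      X (none : Option (Fin (n + 1))) ^ (d - m i) *
        rename some (homogeneousComponent d (f i)))
    (α : Fin c → Fin p) (hα : StrictMono α)
    (β : Fin c → Fin (n + 1)) (hβ : StrictMono β)
    (μ M : _)
    (hμ : μ = Matrix.det (Matrix.of fun a b : Fin c => pderiv (β b) (f (α a))))
    (hM : M = Matrix.det
      (Matrix.of fun a b : Fin c => pderiv (some (β b) : Option (Fin (n + 1))) (F (α a)))) :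
    aeval (fun i : Fin (n + 1) =>
        X (none : Option (Fin (n + 1))) * X (some i)) μ
      = X (none : Option (Fin (n + 1))) ^ ((∑ l, m (α l)) - c) * M := by
  -- decomposition of f i into homogeneous components
  have hfd : ∀ i, f i = ∑ d ∈ Finset.Icc (m i) (f i).totalDegree,
      homogeneousComponent d (f i) := by
    intro i
    conv_lhs => rw [← sum_homogeneousComponent (f i)]
    symm
    apply Finset.sum_subset
    · intro d hd
      simp only [Finset.mem_Icc] at hd
      simp only [Finset.mem_range]
      omega
    · intro d hd1 hd2
      apply hlow
      simp only [Finset.mem_range] at hd1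
      simp only [Finset.mem_Icc, not_and, not_le] at hd2
      omega
  -- key entrywise identity
  have key : ∀ (a b : Fin c),
      aeval (fun i : Fin (n + 1) =>
        X (none : Option (Fin (n + 1))) * X (some i)) (pderiv (β b) (f (α a)))
      = X (none : Option (Fin (n + 1))) ^ (m (α a) - 1) *
          pderiv (some (β b) : Option (Fin (n + 1))) (F (α a)) := by
    intro a b
    rw [hF]
    conv_lhs => rw [hfd (α a)]
    rw [map_sum, map_sum, map_sum, Finset.mul_sum]
    apply Finset.sum_congr rfl
    intro d hd
    simp only [Finset.mem_Icc] at hd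
    have h1 := hm0 (α a)
    rw [aux_subst (aux_hom_pderiv (homogeneousComponent_isHomogeneous d (f (α a))) (β b)),
      pderiv_mul, ← pderiv_rename (Option.some_injective _)]
    have h2 : pderiv (some (β b) : Option (Fin (n + 1)))
        ((X none : MvPolynomial (Option (Fin (n + 1))) k) ^ (d - m (α a))) = 0 := by
      rw [pderiv_pow, pderiv_X_of_ne (by simp)]
      ring
    rw [h2, zero_mul, zero_add, ← mul_assoc, ← pow_add]
    congr 2
    omega
  -- pass to determinants
  rw [hμ, hM, AlgHom.map_det, AlgHom.mapMatrix_apply]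
  have hmap : (Matrix.of fun a b : Fin c => pderiv (β b) (f (α a))).map
        (aeval (fun i : Fin (n + 1) =>
          X (none : Option (Fin (n + 1))) * X (some i)))
      = Matrix.of (fun a b : Fin c =>
          (fun a : Fin c => X (none : Option (Fin (n + 1))) ^ (m (α a) - 1)) a *
          (Matrix.of fun a b : Fin c =>
            pderiv (some (β b) : Option (Fin (n + 1))) (F (α a))) a b) := by
    funext a b
    exact key a b
  rw [hmap, Matrix.det_mul_column, Finset.prod_pow_eq_pow_sum]
  congr 2
  have h1 : ∀ l : Fin c, 1 ≤ m (α l) := fun l => hm0 (α l)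
  have h2 : ∑ l, m (α l) = (∑ l, (m (α l) - 1)) + c := by
    calc ∑ l, m (α l) = ∑ l, ((m (α l) - 1) + 1) :=
          Finset.sum_congr rfl fun l _ => by have := h1 l; omega
    _ = (∑ l, (m (α l) - 1)) + ∑ _l : Fin c, 1 := Finset.sum_add_distrib
    _ = (∑ l, (m (α l) - 1)) + c := by simp
  omega
end
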